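/- Let n ≥ p ≥ 1 and let Y, Y' ∈ ℝ^{n×p} both have orthonormal columns, with YᵀY' invertible. Set W := Y'(YᵀY')^{-1} − Y and let W = U Σ Vᵀ be a thin SVD of W. Then YᵀW = 0, and the matrix Z := U arctan(Σ) Vᵀ satisfies ZᵀY = 0 and every singular value of Z is strictly less than π/2. -/

import Mathlib

open Matrix

/-- the logarithm map takes values in horizontal vectors with
singular values below `π/2`.
Let `Y, Y' ∈ ℝ^{n×p}` have orthonormal columns with `YᵀY'` invertible, set
`W = Y'(YᵀY')⁻¹ − Y` and let `W = U Σ Vᵀ` be a thin SVD. Then `YᵀW = 0`, and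
`Z = U arctan(Σ) Vᵀ` satisfies `ZᵀY = 0` and every singular value of `Z`
(i.e., the diagonal of any thin SVD of `Z`) is strictly less than `π/2`. -/
theorem log_image_horizontal_and_below_cut
    (n p : ℕ) (hp : 0 < p) (hpn : p ≤ n)
    (Y Y' U : Matrix (Fin n) (Fin p) ℝ) (V : Matrix (Fin p) (Fin p) ℝ)
    (σ : Fin p → ℝ)
    (hY : Yᵀ * Y = 1) (hY' : Y'ᵀ * Y' = 1) (hinv : IsUnit (Yᵀ * Y'))
    (hU : Uᵀ * U = 1) (hV : Vᵀ * V = 1)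
    (hσ : ∀ i, 0 ≤ σ i)
    (hSVD : Y' * (Yᵀ * Y')⁻¹ - Y = U * Matrix.diagonal σ * Vᵀ) :
    Yᵀ * (Y' * (Yᵀ * Y')⁻¹ - Y) = 0 ∧
    (U * Matrix.diagonal (fun i => Real.arctan (σ i)) * Vᵀ)ᵀ * Y = 0 ∧
    (∀ (U' : Matrix (Fin n) (Fin p) ℝ) (V' : Matrix (Fin p) (Fin p) ℝ)
        (μ : Fin p → ℝ),
      U'ᵀ * U' = 1 → V'ᵀ * V' = 1 → (∀ i, 0 ≤ μ i) →
      U * Matrix.diagonal (fun i => Real.arctan (σ i)) * Vᵀ =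
        U' * Matrix.diagonal μ * V'ᵀ →
      ∀ i, μ i < Real.pi / 2) := by
  classical
  haveI : Nonempty (Fin p) := ⟨⟨0, hp⟩⟩
  have hdet : IsUnit (Yᵀ * Y').det := (Matrix.isUnit_iff_isUnit_det _).mp hinv
  set a : Fin p → ℝ := fun i => Real.arctan (σ i) with ha
  -- V is orthogonal, so V * Vᵀ = 1
  have hVVT : V * Vᵀ = 1 := mul_eq_one_comm.mp hV
  -- Part 1
  have h1 : Yᵀ * (Y' * (Yᵀ * Y')⁻¹ - Y) = 0 := by
    rw [Matrix.mul_sub, ← Matrix.mul_assoc, Matrix.mul_nonsing_inv _ hdet, hY, sub_self]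
  refine ⟨h1, ?_, ?_⟩
  · -- Part 2
    have hA : (Yᵀ * U) * Matrix.diagonal σ = 0 := by
      have h2 : Yᵀ * (U * Matrix.diagonal σ * Vᵀ) = 0 := by rw [← hSVD]; exact h1
      have h3 : Yᵀ * (U * Matrix.diagonal σ * Vᵀ) * V = 0 := by rw [h2, Matrix.zero_mul]
      calc (Yᵀ * U) * Matrix.diagonal σ
          = Yᵀ * (U * Matrix.diagonal σ * Vᵀ) * V := by
            simp only [Matrix.mul_assoc, hV, Matrix.mul_one]
        _ = 0 := h3
    have hB : (Yᵀ * U) * Matrix.diagonal a = 0 := by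
      ext i j
      have := congrFun (congrFun hA i) j
      simp only [Matrix.mul_diagonal, Matrix.zero_apply] at this ⊢
      rcases mul_eq_zero.mp this with h | h
      · rw [h, zero_mul]
      · have : σ j = 0 := h
        simp [ha, this, Real.arctan_zero]
    have hBT : Matrix.diagonal a * (Uᵀ * Y) = 0 := by
      have := congrArg Matrix.transpose hB
      simpa [Matrix.transpose_mul, Matrix.diagonal_transpose, Matrix.mul_assoc] using this
    calc (U * Matrix.diagonal a * Vᵀ)ᵀ * Y
        = V * (Matrix.diagonal a * (Uᵀ * Y)) := by
          simp [Matrix.transpose_mul, Matrix.diagonal_transpose, Matrix.mul_assoc]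
      _ = 0 := by rw [hBT, Matrix.mul_zero]
  · -- Part 3
    intro U' V' μ hU' hV' hμ heq i
    have hV'VT : V' * V'ᵀ = 1 := mul_eq_one_comm.mp hV'
    set M : Matrix (Fin p) (Fin p) ℝ := V'ᵀ * V with hM
    have hMMT : M * Mᵀ = 1 := by
      rw [hM]
      simp only [Matrix.transpose_mul, Matrix.transpose_transpose]
      calc V'ᵀ * V * (Vᵀ * V') = V'ᵀ * (V * Vᵀ) * V' := by
            simp only [Matrix.mul_assoc]
        _ = 1 := by rw [hVVT, Matrix.mul_one, hV']
    -- Z^T Z computed both ways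
    have key : Matrix.diagonal (fun j => μ j ^ 2) = M * Matrix.diagonal (fun j => a j ^ 2) * Mᵀ := by
      have hZZ : V' * Matrix.diagonal (fun j => μ j ^ 2) * V'ᵀ
          = V * Matrix.diagonal (fun j => a j ^ 2) * Vᵀ := by
        have e1 : (U * Matrix.diagonal a * Vᵀ)ᵀ * (U * Matrix.diagonal a * Vᵀ)
            = V * Matrix.diagonal (fun j => a j ^ 2) * Vᵀ := by
          simp only [Matrix.transpose_mul, Matrix.transpose_transpose,
            Matrix.diagonal_transpose, Matrix.mul_assoc]
          rw [← Matrix.mul_assoc Uᵀ U, hU, Matrix.one_mul,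
            ← Matrix.mul_assoc (Matrix.diagonal a), Matrix.diagonal_mul_diagonal]
          congr 2
          ext j
          ring
        have e2 : (U' * Matrix.diagonal μ * V'ᵀ)ᵀ * (U' * Matrix.diagonal μ * V'ᵀ)
            = V' * Matrix.diagonal (fun j => μ j ^ 2) * V'ᵀ := by
          simp only [Matrix.transpose_mul, Matrix.transpose_transpose,
            Matrix.diagonal_transpose, Matrix.mul_assoc]
          rw [← Matrix.mul_assoc U'ᵀ U', hU', Matrix.one_mul,
            ← Matrix.mul_assoc (Matrix.diagonal μ), Matrix.diagonal_mul_diagonal]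
          congr 2
          ext j
          ring
        rw [← e1, ← e2, heq]
      calc Matrix.diagonal (fun j => μ j ^ 2)
          = V'ᵀ * (V' * Matrix.diagonal (fun j => μ j ^ 2) * V'ᵀ) * V' := by
            simp only [Matrix.mul_assoc, hV'VT, Matrix.mul_one]
            rw [← Matrix.mul_assoc, hV', Matrix.one_mul, Matrix.mul_one]
        _ = V'ᵀ * (V * Matrix.diagonal (fun j => a j ^ 2) * Vᵀ) * V' := by rw [hZZ]
        _ = M * Matrix.diagonal (fun j => a j ^ 2) * Mᵀ := by
            rw [hM]
            simp only [Matrix.transpose_mul, Matrix.transpose_transpose, Matrix.mul_assoc]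
    -- entrywise at (i,i)
    have hμ2 : μ i ^ 2 = ∑ j, M i j ^ 2 * a j ^ 2 := by
      have := congrFun (congrFun key i) i
      simp only [Matrix.diagonal_apply_eq] at this
      rw [this]
      rw [Matrix.mul_apply]
      congr 1
      ext j
      rw [Matrix.mul_diagonal, Matrix.transpose_apply]
      ring
    have hrow : ∑ j, M i j ^ 2 = 1 := by
      have := congrFun (congrFun hMMT i) i
      simp only [Matrix.one_apply_eq] at this
      rw [← this, Matrix.mul_apply]
      congr 1
      ext j
      rw [Matrix.transpose_apply]
      ring
    -- bound
    set c : ℝ := Finset.univ.sup' Finset.univ_nonempty (fun j => a j ^ 2) with hc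
    have hcmem : ∃ j, c = a j ^ 2 := by
      obtain ⟨j, _, hj⟩ := Finset.exists_mem_eq_sup' Finset.univ_nonempty (fun j => a j ^ 2)
      exact ⟨j, hj⟩
    have hclt : c < (Real.pi / 2) ^ 2 := by
      obtain ⟨j, hj⟩ := hcmem
      rw [hj]
      have h1 : 0 ≤ a j := by simpa [ha] using Real.arctan_strictMono.monotone (hσ j)
      have h2 : a j < Real.pi / 2 := Real.arctan_lt_pi_div_two _
      exact pow_lt_pow_left₀ h2 h1 (by norm_num)
    have hle : μ i ^ 2 ≤ c := by
      rw [hμ2]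
      calc ∑ j, M i j ^ 2 * a j ^ 2 ≤ ∑ j, M i j ^ 2 * c := by
            apply Finset.sum_le_sum
            intro j _
            exact mul_le_mul_of_nonneg_left
              (Finset.le_sup' (fun j => a j ^ 2) (Finset.mem_univ j)) (sq_nonneg _)
        _ = (∑ j, M i j ^ 2) * c := by rw [← Finset.sum_mul]
        _ = c := by rw [hrow, one_mul]
      
    have : μ i ^ 2 < (Real.pi / 2) ^ 2 := lt_of_le_of_lt hle hclt
    exact lt_of_pow_lt_pow_left₀ 2 (le_of_lt (by positivity : (0:ℝ) < Real.pi / 2)) this
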